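/- Let N ≥ 1, n, k, l ∈ ℤ, a ∈ ℂ with a ≠ 0, and set b = −1/a. Let p_1,…,p_N ∈ ℂ with p_i ∉ {0, a, −1/a}, set p̄_j = 1/p_j for each j (so p̄_j ∉ {0, −a, 1/a}), assume p_i + p̄_j ≠ 0 for all i,j, and let ξ_{i0}, ξ̄_{j0} ∈ ℂ. Then the Gram-type tau functions satisfy the three reduction conditions: (i) ∂_{x_1} τ_{nkl} = ∂_{x_{-1}} τ_{nkl}, (ii) −a² ∂_{t_a} τ_{nkl} = ∂_{t_b} τ_{nkl}, and (iii) τ_{n-1, k+1, l+1} = τ_{nkl}, identically in (x_1, x_{-1}, t_a, t_b). -/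

import Mathlib

noncomputable section

/-- The phase `ξ_i = x_{-1}/p_i + p_i x_1 + t_a/(p_i − a) + t_b/(p_i − b) + ξ_{i0}`. -/
def xiph {N : ℕ} (p : Fin N → ℂ) (a b : ℂ) (xi0 : Fin N → ℂ) (i : Fin N)
    (x1 xm1 ta tb : ℝ) : ℂ :=
  (xm1 : ℂ) / p i + p i * (x1 : ℂ) + (ta : ℂ) / (p i - a) + (tb : ℂ) / (p i - b) + xi0 i

/-- The phase `ξ̄_j = x_{-1}/p̄_j + p̄_j x_1 + t_a/(p̄_j + a) + t_b/(p̄_j + b) + ξ̄_{j0}`. -/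
def xibph {N : ℕ} (pb : Fin N → ℂ) (a b : ℂ) (xib0 : Fin N → ℂ) (j : Fin N)
    (x1 xm1 ta tb : ℝ) : ℂ :=
  (xm1 : ℂ) / pb j + pb j * (x1 : ℂ) + (ta : ℂ) / (pb j + a) + (tb : ℂ) / (pb j + b) + xib0 j

/-- `φ_i^{nkl} = p_i^n (p_i − a)^k (p_i − b)^l e^{ξ_i}`. -/
def phifn {N : ℕ} (p : Fin N → ℂ) (a b : ℂ) (xi0 : Fin N → ℂ) (n k l : ℤ) (i : Fin N)
    (x1 xm1 ta tb : ℝ) : ℂ :=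
  p i ^ n * (p i - a) ^ k * (p i - b) ^ l * Complex.exp (xiph p a b xi0 i x1 xm1 ta tb)

/-- `ψ_j^{nkl} = (−1/p̄_j)^n (−1/(p̄_j + a))^k (−1/(p̄_j + b))^l e^{ξ̄_j}`. -/
def psifn {N : ℕ} (pb : Fin N → ℂ) (a b : ℂ) (xib0 : Fin N → ℂ) (n k l : ℤ) (j : Fin N)
    (x1 xm1 ta tb : ℝ) : ℂ :=
  (-1 / pb j) ^ n * (-1 / (pb j + a)) ^ k * (-1 / (pb j + b)) ^ l *
    Complex.exp (xibph pb a b xib0 j x1 xm1 ta tb)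

/-- The Gram-type tau function `τ_{nkl} = det(δ_{ij} + φ_i ψ_j/(p_i + p̄_j))`. -/
def tauf {N : ℕ} (p pb : Fin N → ℂ) (a b : ℂ) (xi0 xib0 : Fin N → ℂ) (n k l : ℤ)
    (x1 xm1 ta tb : ℝ) : ℂ :=
  Matrix.det (Matrix.of fun i j : Fin N =>
    (if i = j then (1 : ℂ) else 0) +
      phifn p a b xi0 n k l i x1 xm1 ta tb * psifn pb a b xib0 n k l j x1 xm1 ta tb
        / (p i + pb j))

/-! ### Complex-variable mirrors of the definitions -/

def xiphC {N : ℕ} (p : Fin N → ℂ) (a b : ℂ) (xi0 : Fin N → ℂ) (i : Fin N)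
    (x1 xm1 ta tb : ℂ) : ℂ :=
  xm1 / p i + p i * x1 + ta / (p i - a) + tb / (p i - b) + xi0 i

def xibphC {N : ℕ} (pb : Fin N → ℂ) (a b : ℂ) (xib0 : Fin N → ℂ) (j : Fin N)
    (x1 xm1 ta tb : ℂ) : ℂ :=
  xm1 / pb j + pb j * x1 + ta / (pb j + a) + tb / (pb j + b) + xib0 j

def phifnC {N : ℕ} (p : Fin N → ℂ) (a b : ℂ) (xi0 : Fin N → ℂ) (n k l : ℤ) (i : Fin N)
    (x1 xm1 ta tb : ℂ) : ℂ :=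
  p i ^ n * (p i - a) ^ k * (p i - b) ^ l * Complex.exp (xiphC p a b xi0 i x1 xm1 ta tb)

def psifnC {N : ℕ} (pb : Fin N → ℂ) (a b : ℂ) (xib0 : Fin N → ℂ) (n k l : ℤ) (j : Fin N)
    (x1 xm1 ta tb : ℂ) : ℂ :=
  (-1 / pb j) ^ n * (-1 / (pb j + a)) ^ k * (-1 / (pb j + b)) ^ l *
    Complex.exp (xibphC pb a b xib0 j x1 xm1 ta tb)

def taufC {N : ℕ} (p pb : Fin N → ℂ) (a b : ℂ) (xi0 xib0 : Fin N → ℂ) (n k l : ℤ)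
    (x1 xm1 ta tb : ℂ) : ℂ :=
  Matrix.det (Matrix.of fun i j : Fin N =>
    (if i = j then (1 : ℂ) else 0) +
      phifnC p a b xi0 n k l i x1 xm1 ta tb * psifnC pb a b xib0 n k l j x1 xm1 ta tb
        / (p i + pb j))

lemma tauf_eq_taufC {N : ℕ} (p pb : Fin N → ℂ) (a b : ℂ) (xi0 xib0 : Fin N → ℂ)
    (n k l : ℤ) (x1 xm1 ta tb : ℝ) :
    tauf p pb a b xi0 xib0 n k l x1 xm1 ta tb
      = taufC p pb a b xi0 xib0 n k l x1 xm1 ta tb := rfl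

/-! ### Diagonal conjugation invariance of the determinant -/

lemma det_conj' {N : ℕ} (d : Fin N → ℂ) (hd : ∀ i, d i ≠ 0) (f g : Fin N → ℂ)
    (den : Fin N → Fin N → ℂ) :
    (Matrix.of fun i j : Fin N =>
        (if i = j then (1 : ℂ) else 0) + (d i * f i) * ((d j)⁻¹ * g j) / den i j).det
      = (Matrix.of fun i j : Fin N =>
        (if i = j then (1 : ℂ) else 0) + f i * g j / den i j).det := by
  have key : (Matrix.of fun i j : Fin N =>
        (if i = j then (1 : ℂ) else 0) + (d i * f i) * ((d j)⁻¹ * g j) / den i j)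
      = Matrix.diagonal d *
          (Matrix.of fun i j : Fin N =>
            (if i = j then (1 : ℂ) else 0) + f i * g j / den i j) *
          Matrix.diagonal (fun j => (d j)⁻¹) := by
    ext i j
    rw [Matrix.mul_diagonal, Matrix.diagonal_mul, Matrix.of_apply, Matrix.of_apply]
    by_cases h : i = j
    · subst h
      simp only [eq_self_iff_true, if_true]
      have c1 : d i * f i * ((d i)⁻¹ * g i) = f i * g i := by
        rw [show d i * f i * ((d i)⁻¹ * g i) = d i * (d i)⁻¹ * (f i * g i) from by ring,
          mul_inv_cancel₀ (hd i), one_mul]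
      rw [c1, show d i * (1 + f i * g i / den i i) * (d i)⁻¹
          = d i * (d i)⁻¹ * (1 + f i * g i / den i i) from by ring,
        mul_inv_cancel₀ (hd i), one_mul]
    · simp only [if_neg h]
      ring
  rw [key, Matrix.det_mul, Matrix.det_mul, Matrix.det_diagonal, Matrix.det_diagonal,
    Finset.prod_inv_distrib]
  have hprod : (∏ i, d i) ≠ 0 := Finset.prod_ne_zero_iff.mpr fun i _ => hd i
  rw [mul_comm (∏ i, d i) _, mul_assoc, mul_inv_cancel₀ hprod, mul_one]

/-! ### Shift identities for the phases -/

/-- The conjugating exponent. -/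
def Dexp {N : ℕ} (p : Fin N → ℂ) (a : ℂ) (i : Fin N) (w s : ℂ) : ℂ :=
  w * (1 / p i - p i) + s / (p i - a) + (s / a ^ 2) / (p i - (-1 / a))

lemma phifnC_shift {N : ℕ} (p : Fin N → ℂ) (a : ℂ) (xi0 : Fin N → ℂ) (n k l : ℤ)
    (i : Fin N) (z w s t : ℂ) :
    phifnC p a (-1 / a) xi0 n k l i z w s t
      = Complex.exp (Dexp p a i w s)
          * phifnC p a (-1 / a) xi0 n k l i (z + w) 0 0 (t - s / a ^ 2) := by
  have h : xiphC p a (-1 / a) xi0 i z w s t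
      = Dexp p a i w s + xiphC p a (-1 / a) xi0 i (z + w) 0 0 (t - s / a ^ 2) := by
    unfold xiphC Dexp
    ring
  rw [phifnC, phifnC, h, Complex.exp_add]
  ring

lemma psifnC_shift {N : ℕ} (p : Fin N → ℂ) (a : ℂ) (xib0 : Fin N → ℂ) (n k l : ℤ)
    (ha : a ≠ 0) (j : Fin N) (hp0 : p j ≠ 0) (hpa : p j - a ≠ 0)
    (hab : 1 + p j * a ≠ 0) (hap : a - p j ≠ 0) (z w s t : ℂ) :
    psifnC (fun j => 1 / p j) a (-1 / a) xib0 n k l j z w s t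
      = (Complex.exp (Dexp p a j w s))⁻¹
          * psifnC (fun j => 1 / p j) a (-1 / a) xib0 n k l j (z + w) 0 0 (t - s / a ^ 2) := by
  have h : xibphC (fun j => 1 / p j) a (-1 / a) xib0 j z w s t
      = -Dexp p a j w s
          + xibphC (fun j => 1 / p j) a (-1 / a) xib0 j (z + w) 0 0 (t - s / a ^ 2) := by
    unfold xibphC Dexp
    simp only
    rw [show (1:ℂ) / p j + a = (1 + p j * a) / p j from by field_simp [hp0],
        show (1:ℂ) / p j + (-1 / a) = (a - p j) / (p j * a) from by field_simp [hp0, ha]; ring,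
        show p j - (-1 / a) = (1 + p j * a) / a from by field_simp [ha]; ring]
    field_simp [hp0, hpa, hab, ha, hap]
    ring
  rw [psifnC, psifnC, h, Complex.exp_add, Complex.exp_neg]
  ring

/-! ### Index-shift (reduction) identities -/

lemma phifnC_red {N : ℕ} (p : Fin N → ℂ) (a : ℂ) (xi0 : Fin N → ℂ) (n k l : ℤ)
    (i : Fin N) (hp0 : p i ≠ 0) (hpa : p i - a ≠ 0) (hpb : p i - (-1 / a) ≠ 0)
    (z w s t : ℂ) :
    phifnC p a (-1 / a) xi0 (n - 1) (k + 1) (l + 1) i z w s t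
      = ((p i - a) * (p i - (-1 / a)) / p i)
          * phifnC p a (-1 / a) xi0 n k l i z w s t := by
  unfold phifnC
  rw [zpow_sub_one₀ hp0, zpow_add_one₀ hpa, zpow_add_one₀ hpb]
  ring

lemma psifnC_red {N : ℕ} (p : Fin N → ℂ) (a : ℂ) (xib0 : Fin N → ℂ) (n k l : ℤ)
    (ha : a ≠ 0) (j : Fin N) (hp0 : p j ≠ 0) (hpa : p j - a ≠ 0)
    (hpb : p j - (-1 / a) ≠ 0) (hab : 1 + p j * a ≠ 0) (hap : a - p j ≠ 0)
    (z w s t : ℂ) :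
    psifnC (fun j => 1 / p j) a (-1 / a) xib0 (n - 1) (k + 1) (l + 1) j z w s t
      = ((p j - a) * (p j - (-1 / a)) / p j)⁻¹
          * psifnC (fun j => 1 / p j) a (-1 / a) xib0 n k l j z w s t := by
  have h1 : (-1 : ℂ) / (1 / p j) ≠ 0 := by
    rw [div_ne_zero_iff]
    exact ⟨by norm_num, one_div_ne_zero hp0⟩
  have e2 : (1:ℂ) / p j + a = (1 + p j * a) / p j := by field_simp [hp0]
  have e3 : (1:ℂ) / p j + (-1 / a) = (a - p j) / (p j * a) := by field_simp [hp0, ha]; ring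
  have h2 : (-1 : ℂ) / (1 / p j + a) ≠ 0 := by
    rw [div_ne_zero_iff, e2]
    exact ⟨by norm_num, div_ne_zero hab hp0⟩
  have h3 : (-1 : ℂ) / (1 / p j + (-1 / a)) ≠ 0 := by
    rw [div_ne_zero_iff, e3]
    exact ⟨by norm_num, div_ne_zero hap (mul_ne_zero hp0 ha)⟩
  have key : (-1 / ((1:ℂ) / p j))⁻¹ * (-1 / (1 / p j + a)) * (-1 / (1 / p j + (-1 / a)))
      = ((p j - a) * (p j - (-1 / a)) / p j)⁻¹ := by
    rw [e2, e3, show p j - (-1 / a) = (1 + p j * a) / a from by field_simp [ha]; ring]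
    field_simp
    ring
  unfold psifnC
  simp only
  rw [zpow_sub_one₀ h1, zpow_add_one₀ h2, zpow_add_one₀ h3,
    show (-1 / (1 / p j)) ^ n * (-1 / (1 / p j))⁻¹ * ((-1 / (1 / p j + a)) ^ k * (-1 / (1 / p j + a))) *
        ((-1 / (1 / p j + (-1 / a))) ^ l * (-1 / (1 / p j + (-1 / a)))) *
        Complex.exp (xibphC (fun j => 1 / p j) a (-1 / a) xib0 j z w s t)
      = ((-1 / ((1:ℂ) / p j))⁻¹ * (-1 / (1 / p j + a)) * (-1 / (1 / p j + (-1 / a)))) *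
        ((-1 / (1 / p j)) ^ n * (-1 / (1 / p j + a)) ^ k * (-1 / (1 / p j + (-1 / a))) ^ l *
          Complex.exp (xibphC (fun j => 1 / p j) a (-1 / a) xib0 j z w s t)) from by ring,
    key]

/-! ### The invariance of the tau function -/

lemma taufC_invariance {N : ℕ} (p : Fin N → ℂ) (a : ℂ) (ha : a ≠ 0)
    (xi0 xib0 : Fin N → ℂ) (n k l : ℤ)
    (hp : ∀ i : Fin N, p i ≠ 0 ∧ p i ≠ a ∧ p i ≠ -1 / a) (z w s t : ℂ) :
    taufC p (fun j => 1 / p j) a (-1 / a) xi0 xib0 n k l z w s t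
      = taufC p (fun j => 1 / p j) a (-1 / a) xi0 xib0 n k l (z + w) 0 0 (t - s / a ^ 2) := by
  refine Eq.trans (congrArg Matrix.det ?_)
    (det_conj' (fun i => Complex.exp (Dexp p a i w s)) (fun i => Complex.exp_ne_zero _)
      (fun i => phifnC p a (-1 / a) xi0 n k l i (z + w) 0 0 (t - s / a ^ 2))
      (fun j => psifnC (fun j => 1 / p j) a (-1 / a) xib0 n k l j (z + w) 0 0 (t - s / a ^ 2))
      (fun i j => p i + (fun j => 1 / p j) j))
  ext i j
  simp only [Matrix.of_apply]
  have hp0 : p j ≠ 0 := (hp j).1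
  have hpa : p j - a ≠ 0 := sub_ne_zero.mpr (hp j).2.1
  have hap : a - p j ≠ 0 := sub_ne_zero.mpr (Ne.symm (hp j).2.1)
  have hab : 1 + p j * a ≠ 0 := by
    intro h
    apply (hp j).2.2
    field_simp
    linear_combination h
  rw [phifnC_shift p a xi0 n k l i z w s t,
    psifnC_shift p a xib0 n k l ha j hp0 hpa hab hap z w s t]

lemma taufC_red {N : ℕ} (p : Fin N → ℂ) (a : ℂ) (ha : a ≠ 0)
    (xi0 xib0 : Fin N → ℂ) (n k l : ℤ)
    (hp : ∀ i : Fin N, p i ≠ 0 ∧ p i ≠ a ∧ p i ≠ -1 / a) (z w s t : ℂ) :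
    taufC p (fun j => 1 / p j) a (-1 / a) xi0 xib0 (n - 1) (k + 1) (l + 1) z w s t
      = taufC p (fun j => 1 / p j) a (-1 / a) xi0 xib0 n k l z w s t := by
  have hp0 : ∀ i, p i ≠ 0 := fun i => (hp i).1
  have hpa : ∀ i, p i - a ≠ 0 := fun i => sub_ne_zero.mpr (hp i).2.1
  have hpb : ∀ i, p i - (-1 / a) ≠ 0 := fun i => sub_ne_zero.mpr (hp i).2.2
  have hap : ∀ i, a - p i ≠ 0 := fun i => sub_ne_zero.mpr (Ne.symm (hp i).2.1)
  have hab : ∀ i, 1 + p i * a ≠ 0 := by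
    intro i h
    apply (hp i).2.2
    field_simp
    linear_combination h
  refine Eq.trans (congrArg Matrix.det ?_)
    (det_conj' (fun i => (p i - a) * (p i - (-1 / a)) / p i)
      (fun i => div_ne_zero (mul_ne_zero (hpa i) (hpb i)) (hp0 i))
      (fun i => phifnC p a (-1 / a) xi0 n k l i z w s t)
      (fun j => psifnC (fun j => 1 / p j) a (-1 / a) xib0 n k l j z w s t)
      (fun i j => p i + (fun j => 1 / p j) j))
  ext i j
  simp only [Matrix.of_apply]
  rw [phifnC_red p a xi0 n k l i (hp0 i) (hpa i) (hpb i) z w s t,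
    psifnC_red p a xib0 n k l ha j (hp0 j) (hpa j) (hpb j) (hab j) (hap j) z w s t]

/-! ### Differentiability in the last variable -/

lemma taufC_diff {N : ℕ} (p pb : Fin N → ℂ) (a b : ℂ) (xi0 xib0 : Fin N → ℂ)
    (n k l : ℤ) (z w s : ℂ) :
    Differentiable ℂ (fun t => taufC p pb a b xi0 xib0 n k l z w s t) := by
  unfold taufC phifnC psifnC xiphC xibphC
  simp only [Matrix.det_apply', Matrix.of_apply]
  apply Differentiable.fun_sum
  intro σ _
  apply Differentiable.const_mul
  apply Differentiable.fun_finsetProd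
  intro i _
  apply Differentiable.fun_add (differentiable_const _)
  apply Differentiable.div_const
  apply Differentiable.fun_mul
  · apply Differentiable.const_mul
    apply Complex.differentiable_exp.comp
    apply Differentiable.add_const
    apply Differentiable.const_add
    exact (differentiable_id.div_const _)
  · apply Differentiable.const_mul
    apply Complex.differentiable_exp.comp
    apply Differentiable.add_const
    apply Differentiable.const_add
    exact (differentiable_id.div_const _)

/-! ### Main theorem -/

theorem kp_reduction_conditions (N : ℕ) (hN : 1 ≤ N) (n k l : ℤ)
    (a : ℂ) (ha : a ≠ 0)
    (p : Fin N → ℂ) (xi0 xib0 : Fin N → ℂ)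
    (hp : ∀ i : Fin N, p i ≠ 0 ∧ p i ≠ a ∧ p i ≠ -1 / a)
    (hsum : ∀ i j : Fin N, p i + 1 / p j ≠ 0) :
    ∀ x1 xm1 ta tb : ℝ,
      (deriv (fun u => tauf p (fun j => 1 / p j) a (-1 / a) xi0 xib0 n k l u xm1 ta tb) x1
          = deriv (fun v => tauf p (fun j => 1 / p j) a (-1 / a) xi0 xib0 n k l x1 v ta tb) xm1)
        ∧ (-a ^ 2 *
              deriv (fun w => tauf p (fun j => 1 / p j) a (-1 / a) xi0 xib0 n k l x1 xm1 w tb) ta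
            = deriv (fun w => tauf p (fun j => 1 / p j) a (-1 / a) xi0 xib0 n k l x1 xm1 ta w) tb)
        ∧ tauf p (fun j => 1 / p j) a (-1 / a) xi0 xib0 (n - 1) (k + 1) (l + 1) x1 xm1 ta tb
            = tauf p (fun j => 1 / p j) a (-1 / a) xi0 xib0 n k l x1 xm1 ta tb := by
  intro x1 xm1 ta tb
  refine ⟨?_, ?_, ?_⟩
  · -- ∂_{x1} = ∂_{x_{-1}}
    set g : ℝ → ℂ := fun r =>
      taufC p (fun j => 1 / p j) a (-1 / a) xi0 xib0 n k l (r : ℂ) 0 0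
        ((tb : ℂ) - (ta : ℂ) / a ^ 2) with hg
    have h1 : (fun u : ℝ => tauf p (fun j => 1 / p j) a (-1 / a) xi0 xib0 n k l u xm1 ta tb)
        = fun u : ℝ => g (u + xm1) := by
      funext u
      rw [tauf_eq_taufC, taufC_invariance p a ha xi0 xib0 n k l hp, hg]
      norm_cast
    have h2 : (fun v : ℝ => tauf p (fun j => 1 / p j) a (-1 / a) xi0 xib0 n k l x1 v ta tb)
        = fun v : ℝ => g (x1 + v) := by
      funext v
      rw [tauf_eq_taufC, taufC_invariance p a ha xi0 xib0 n k l hp, hg]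
      norm_cast
    rw [h1, h2, deriv_comp_add_const, deriv_comp_const_add, add_comm]
  · -- -a² ∂_{t_a} = ∂_{t_b}
    set G : ℂ → ℂ := fun v =>
      taufC p (fun j => 1 / p j) a (-1 / a) xi0 xib0 n k l ((x1 : ℂ) + (xm1 : ℂ)) 0 0 v with hG
    have hGdiff : Differentiable ℂ G := taufC_diff p (fun j => 1 / p j) a (-1 / a) xi0 xib0 n k l _ 0 0
    set c : ℂ := (tb : ℂ) - (ta : ℂ) / a ^ 2 with hc
    have h1 : (fun w : ℝ => tauf p (fun j => 1 / p j) a (-1 / a) xi0 xib0 n k l x1 xm1 w tb)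
        = fun w : ℝ => G ((tb : ℂ) - (w : ℂ) / a ^ 2) := by
      funext w
      rw [tauf_eq_taufC, taufC_invariance p a ha xi0 xib0 n k l hp, hG]
    have h2 : (fun w : ℝ => tauf p (fun j => 1 / p j) a (-1 / a) xi0 xib0 n k l x1 xm1 ta w)
        = fun w : ℝ => G ((w : ℂ) - (ta : ℂ) / a ^ 2) := by
      funext w
      rw [tauf_eq_taufC, taufC_invariance p a ha xi0 xib0 n k l hp, hG]
    have hinner1 : HasDerivAt (fun w : ℝ => (tb : ℂ) - (w : ℂ) / a ^ 2) (-(1 / a ^ 2)) ta := by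
      have : HasDerivAt (fun zz : ℂ => (tb : ℂ) - zz / a ^ 2) (-(1 / a ^ 2)) ((ta : ℝ) : ℂ) := by
        simpa using ((hasDerivAt_id ((ta : ℝ) : ℂ)).div_const (a ^ 2)).const_sub (tb : ℂ)
      exact this.comp_ofReal
    have hinner2 : HasDerivAt (fun w : ℝ => (w : ℂ) - (ta : ℂ) / a ^ 2) 1 tb := by
      have : HasDerivAt (fun zz : ℂ => zz - (ta : ℂ) / a ^ 2) 1 ((tb : ℝ) : ℂ) :=
        (hasDerivAt_id _).sub_const _
      exact this.comp_ofReal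
    have hOuter1 : HasDerivAt G (deriv G c) ((tb : ℂ) - (ta : ℂ) / a ^ 2) :=
      (hGdiff _).hasDerivAt
    have hOuter2 : HasDerivAt G (deriv G c) ((tb : ℂ) - (ta : ℂ) / a ^ 2) :=
      (hGdiff _).hasDerivAt
    have hd1 : HasDerivAt (fun w : ℝ => G ((tb : ℂ) - (w : ℂ) / a ^ 2))
        (deriv G c * (-(1 / a ^ 2))) ta := by have := hOuter1.comp ta hinner1; exact this
    have hd2 : HasDerivAt (fun w : ℝ => G ((w : ℂ) - (ta : ℂ) / a ^ 2))
        (deriv G c * 1) tb := by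
      have : ((tb : ℝ) : ℂ) - (ta : ℂ) / a ^ 2 = (tb : ℂ) - (ta : ℂ) / a ^ 2 := rfl
      exact hOuter2.comp tb hinner2
    rw [h1, h2, hd1.deriv, hd2.deriv]
    field_simp
  · -- index shift
    rw [tauf_eq_taufC, tauf_eq_taufC]
    exact taufC_red p a ha xi0 xib0 n k l hp _ _ _ _
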